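/- Chi-squared tail bound: for a chi-squared random variable χ²_d with d degrees of freedom and any a > 0, Pr(χ²_d ≥ d + (2+a)x) ≤ exp(−x) for all x ≥ 4d/a². -/

import Mathlib

open MeasureTheory ProbabilityTheory

open Real in
lemma core_exp (a : ℝ) (ha : 0 < a) : (a^2 + 4*a + 8)/a^2 ≤ Real.exp (4/a) := by
  have h := Real.sum_le_exp_of_nonneg (by positivity : (0:ℝ) ≤ 4/a) 4
  simp [Finset.sum_range_succ, Nat.factorial] at h
  have e1 : (a^2+4*a+8)/a^2 = 1 + 4/a + (4/a)^2/2 := by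
    field_simp; ring
  have h4 : (0:ℝ) ≤ (4/a)^3/6 := by positivity
  calc (a^2+4*a+8)/a^2 = 1 + 4/a + (4/a)^2/2 := e1
    _ ≤ 1 + 4/a + (4/a)^2/2 + (4/a)^3/6 := by linarith
    _ ≤ Real.exp (4/a) := by convert h using 1

lemma claimA (D a x : ℝ) (hD : 0 < D) (ha : 0 < a) (hx : 4*D/a^2 ≤ x) :
    D * Real.log ((D + (2+a)*x)/D) ≤ a * x := by
  set x0 : ℝ := 4*D/a^2 with hx0def
  have hx0pos : 0 < x0 := by positivity
  have ha2 : a^2 * x0 = 4*D := by rw [hx0def]; field_simp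
  set u0 : ℝ := D + (2+a)*x0 with hu0def
  set u : ℝ := D + (2+a)*x with hudef
  have hu0pos : 0 < u0 := by positivity
  have h2a : (0:ℝ) < 2 + a := by linarith
  have huu0 : u0 ≤ u := by
    have := mul_le_mul_of_nonneg_left hx h2a.le
    simpa [hu0def, hudef] using by linarith [this]
  have hupos : 0 < u := lt_of_lt_of_le hu0pos huu0
  have hsplit : Real.log (u/D) = Real.log (u0/D) + Real.log (u/u0) := by
    rw [Real.log_div hupos.ne' hD.ne', Real.log_div hu0pos.ne' hD.ne',
        Real.log_div hupos.ne' hu0pos.ne']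
    ring
  -- Term 1
  have hq : u0/D = (a^2+4*a+8)/a^2 := by
    rw [hu0def, hx0def]; field_simp; ring
  have hT1log : Real.log (u0/D) ≤ 4/a := by
    rw [hq, Real.log_le_iff_le_exp (by positivity)]
    exact core_exp a ha
  have hT1 : D * Real.log (u0/D) ≤ a * x0 := by
    have := mul_le_mul_of_nonneg_left hT1log hD.le
    have he : D * (4/a) = a * x0 := by rw [hx0def]; field_simp
    linarith [this, he.le]
  -- Term 2
  have hT2 : D * Real.log (u/u0) ≤ a * (x - x0) := by
    have hlog : Real.log (u/u0) ≤ u/u0 - 1 :=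
      Real.log_le_sub_one_of_pos (by positivity)
    have h1 : D * Real.log (u/u0) ≤ D * (u/u0 - 1) :=
      mul_le_mul_of_nonneg_left hlog hD.le
    have h2 : D * (u/u0 - 1) ≤ a * (x - x0) := by
      rw [div_sub_one hu0pos.ne', ← mul_div_assoc, div_le_iff₀ hu0pos]
      have hxx0 : 0 ≤ x - x0 := by linarith
      have hcoef : (2+a)*D ≤ a * u0 := by nlinarith
      have huminus : u - u0 = (2+a)*(x - x0) := by rw [hudef, hu0def]; ring
      rw [huminus]
      nlinarith [mul_le_mul_of_nonneg_right hcoef hxx0]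
    linarith
  calc D * Real.log (u/D) = D * Real.log (u0/D) + D * Real.log (u/u0) := by
        rw [hsplit]; ring
    _ ≤ a * x0 + a * (x - x0) := add_le_add hT1 hT2
    _ = a * x := by ring

/-- Chi-squared tail bound: for the chi-squared distribution with `d ≥ 1` degrees of freedom
(the Gamma distribution with shape `d/2` and rate `1/2`) and any `a > 0`,
`Pr(χ²_d ≥ d + (2+a)x) ≤ exp(−x)` for all `x ≥ 4d/a²`. -/
theorem chiSq_tail_bound
    (d : ℕ) (hd : 1 ≤ d) (a : ℝ) (ha : 0 < a) (x : ℝ)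
    (hx : (4 : ℝ) * d / a ^ 2 ≤ x) :
    gammaMeasure ((d : ℝ) / 2) (1 / 2) (Set.Ici ((d : ℝ) + (2 + a) * x))
      ≤ ENNReal.ofReal (Real.exp (-x)) := by
  have hD : (0:ℝ) < d := by exact_mod_cast Nat.pos_of_ne_zero (by omega)
  have hxpos : 0 < x := lt_of_lt_of_le (by positivity) hx
  set k : ℝ := (d:ℝ)/2 with hkdef
  have hk : 0 < k := by positivity
  set u : ℝ := (d:ℝ) + (2+a)*x with hudef
  have h2a : (0:ℝ) < 2 + a := by linarith
  have hdu : (d:ℝ) < u := by nlinarith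
  have hupos : 0 < u := lt_trans hD hdu
  set s : ℝ := (u - d)/(2*u) with hsdef
  set c : ℝ := (d:ℝ)/(2*u) with hcdef
  have hcpos : 0 < c := by positivity
  have hspos : 0 < s := by
    apply div_pos (by linarith) (by linarith)
  have hsc : s + c = 1/2 := by
    rw [hsdef, hcdef, ← add_div, div_eq_iff (by positivity : (2*u:ℝ) ≠ 0)]
    ring
  set C : ℝ := Real.exp (-(s*u)) * ((1/2:ℝ) ^ k / Real.Gamma k) with hCdef
  have hGpos : 0 < Real.Gamma k := Real.Gamma_pos_of_pos hk
  have hCpos : 0 < C := by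
    apply mul_pos (Real.exp_pos _)
    exact div_pos (Real.rpow_pos_of_pos (by norm_num) _) hGpos
  set f : ℝ → ℝ := fun t => C * (t ^ (k-1) * Real.exp (-(c * t))) with hfdef
  -- pointwise bound on Ici u
  have hpt : ∀ t ∈ Set.Ici u, gammaPDF k (1/2) t ≤ ENNReal.ofReal (f t) := by
    intro t ht
    have htu : u ≤ t := ht
    have htpos : 0 < t := lt_of_lt_of_le hupos htu
    rw [gammaPDF_of_nonneg htpos.le]
    apply ENNReal.ofReal_le_ofReal
    have hexp : Real.exp (-(1/2 * t)) ≤ Real.exp (-(s*u)) * Real.exp (-(c*t)) := by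
      rw [← Real.exp_add, Real.exp_le_exp]
      nlinarith [mul_le_mul_of_nonneg_left htu hspos.le]
    calc (1/2:ℝ) ^ k / Real.Gamma k * t ^ (k-1) * Real.exp (-(1/2 * t))
        ≤ (1/2:ℝ) ^ k / Real.Gamma k * t ^ (k-1) *
            (Real.exp (-(s*u)) * Real.exp (-(c*t))) := by
          apply mul_le_mul_of_nonneg_left hexp
          positivity
      _ = f t := by rw [hfdef, hCdef]; ring
  -- integrability
  have hint : IntegrableOn f (Set.Ioi 0) := by
    have h0 := integrableOn_rpow_mul_exp_neg_mul_rpow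
      (by linarith : (-1:ℝ) < k - 1) zero_lt_one hcpos
    have h1 : IntegrableOn (fun t : ℝ => t ^ (k-1) * Real.exp (-(c * t))) (Set.Ioi 0) := by
      refine h0.congr_fun (fun t ht => ?_) measurableSet_Ioi
      simp only [Real.rpow_one, neg_mul]
    exact h1.const_mul C
  have hfnn : 0 ≤ᵐ[volume.restrict (Set.Ioi 0)] f := by
    filter_upwards [ae_restrict_mem measurableSet_Ioi] with t ht
    have : (0:ℝ) < t := ht
    positivity
  -- integral value
  have hval : ∫ t in Set.Ioi 0, f t = C * ((1/c) ^ k * Real.Gamma k) := by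
    rw [hfdef]
    rw [MeasureTheory.integral_const_mul]
    rw [Real.integral_rpow_mul_exp_neg_mul_Ioi hk hcpos]
  -- measurability of ofReal ∘ f
  have hmeas : Measurable (fun t => ENNReal.ofReal (f t)) := by
    apply Measurable.ennreal_ofReal
    fun_prop
  -- main chain
  rw [gammaMeasure, withDensity_apply _ measurableSet_Ici]
  calc ∫⁻ t in Set.Ici u, gammaPDF k (1/2) t
      ≤ ∫⁻ t in Set.Ici u, ENNReal.ofReal (f t) := setLIntegral_mono hmeas hpt
    _ ≤ ∫⁻ t in Set.Ioi 0, ENNReal.ofReal (f t) :=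
        lintegral_mono_set (fun t ht => lt_of_lt_of_le hupos ht)
    _ = ENNReal.ofReal (∫ t in Set.Ioi 0, f t) :=
        (MeasureTheory.ofReal_integral_eq_lintegral_ofReal hint hfnn).symm
    _ ≤ ENNReal.ofReal (Real.exp (-x)) := by
        apply ENNReal.ofReal_le_ofReal
        rw [hval]
        have hc2 : (1/2:ℝ) ^ k * (1/c) ^ k = (u/d) ^ k := by
          rw [← Real.mul_rpow (by norm_num) (by positivity)]
          congr 1
          rw [hcdef]
          field_simp
        have hstep : C * ((1/c) ^ k * Real.Gamma k)
            = Real.exp (-(s*u)) * (u/(d:ℝ)) ^ k := by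
          rw [hCdef, ← hc2]
          field_simp
        rw [hstep]
        have hud1 : (1:ℝ) < u/d := (one_lt_div hD).mpr hdu
        rw [Real.rpow_def_of_pos (by positivity), ← Real.exp_add, Real.exp_le_exp]
        have hsu : s * u = (u - d)/2 := by
          rw [hsdef]; field_simp
        have hA : (d:ℝ) * Real.log (u/d) ≤ a * x := by
          have := claimA (d:ℝ) a x hD ha (by linarith [hx])
          simpa [hudef] using this
        have hud : u - (d:ℝ) = (2+a)*x := by rw [hudef]; ring
        rw [hsu, hud, hkdef]
        nlinarith [hA]
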